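/- For a commutative ring R, the polynomial ring R[X] with its standard ℤ-grading is a Gelfand ℤ-graded ring if and only if R is a Gelfand ring. -/

import Mathlib

section GradedGelfand

variable {G : Type*} [AddGroup G] [DecidableEq G] {R : Type*} [CommRing R]
variable (𝒜 : G → AddSubgroup R) [GradedRing 𝒜]

/-- A homogeneous (graded) prime ideal: a proper graded ideal that is prime
with respect to homogeneous elements. -/
def IsGradedPrime (P : Ideal R) : Prop :=
  P.IsHomogeneous 𝒜 ∧ P ≠ ⊤ ∧
    ∀ a b : R, SetLike.IsHomogeneousElem 𝒜 a → SetLike.IsHomogeneousElem 𝒜 b →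
      a * b ∈ P → a ∈ P ∨ b ∈ P

/-- A graded maximal ideal: a proper graded ideal maximal among proper graded ideals. -/
def IsGradedMaximal (M : Ideal R) : Prop :=
  M.IsHomogeneous 𝒜 ∧ M ≠ ⊤ ∧
    ∀ J : Ideal R, J.IsHomogeneous 𝒜 → M ≤ J → J ≠ ⊤ → J = M

/-- The homogeneous prime spectrum of a graded ring. -/
def GSpec := { P : Ideal R // IsGradedPrime 𝒜 P }

/-- The Zariski topology on the homogeneous prime spectrum, generated by the basic
open sets `D_G(r)` for homogeneous `r`; the closed sets are exactly the `V_G(I)`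
for graded ideals `I`. -/
instance : TopologicalSpace (GSpec 𝒜) :=
  TopologicalSpace.generateFrom
    { U | ∃ r : R, SetLike.IsHomogeneousElem 𝒜 r ∧ U = { P : GSpec 𝒜 | r ∉ P.1 } }

/-- The set of graded maximal ideals inside the homogeneous prime spectrum. -/
def GMax : Set (GSpec 𝒜) := { P | IsGradedMaximal 𝒜 P.1 }

/-- A Gelfand graded ring: every homogeneous prime ideal is contained in a unique
graded maximal ideal. -/
def IsGelfandGraded : Prop :=
  ∀ P : Ideal R, IsGradedPrime 𝒜 P →
    ∃! M : Ideal R, IsGradedMaximal 𝒜 M ∧ P ≤ M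

/-- A pm⁺ graded ring: for every homogeneous prime `P`, the homogeneous primes
containing `P` form a chain. -/
def IsPMPlusGraded : Prop :=
  ∀ P Q Q' : Ideal R, IsGradedPrime 𝒜 P → IsGradedPrime 𝒜 Q → IsGradedPrime 𝒜 Q' →
    P ≤ Q → P ≤ Q' → Q ≤ Q' ∨ Q' ≤ Q

end GradedGelfand

section Poly

section PolyAux
open Polynomial
variable {R : Type*} [CommRing R]
variable (𝒜 : ℤ → AddSubgroup (Polynomial R)) [GradedRing 𝒜]

include 𝒜 in
lemma aux_dec_neg (hneg : ∀ n : ℤ, n < 0 → 𝒜 n = ⊥) (f : Polynomial R) {i : ℤ} (hi : i < 0) :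
    (DirectSum.decompose 𝒜 f i : Polynomial R) = 0 := by
  have h : (DirectSum.decompose 𝒜 f i : Polynomial R) ∈ (⊥ : AddSubgroup (Polynomial R)) := by
    rw [← hneg i hi]; exact SetLike.coe_mem _
  exact AddSubgroup.mem_bot.mp h

variable (hnat : ∀ (n : ℕ) (p : Polynomial R), p ∈ 𝒜 (n : ℤ) ↔ ∃ r : R, p = C r * X ^ n)
variable (hneg : ∀ n : ℤ, n < 0 → 𝒜 n = ⊥)

include hnat hneg

lemma aux_dec_nat (f : Polynomial R) (n : ℕ) :
    (DirectSum.decompose 𝒜 f (n : ℤ) : Polynomial R) = C (f.coeff n) * X ^ n := by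
  classical
  obtain ⟨r, hr⟩ := (hnat n _).1 (DirectSum.decompose 𝒜 f (n : ℤ)).2
  have hc : f.coeff n = r := by
    conv_lhs => rw [← DirectSum.sum_support_decompose 𝒜 f]
    rw [Polynomial.finset_sum_coeff]
    rw [Finset.sum_eq_single ((n : ℤ))]
    · rw [hr]; simp
    · intro i _ hne
      rcases i with k | k
      · have hk : (Int.ofNat k) = ((k : ℕ) : ℤ) := rfl
        obtain ⟨s, hs⟩ := (hnat k _).1 (DirectSum.decompose 𝒜 f (k : ℤ)).2
        rw [hk, hs, coeff_C_mul, coeff_X_pow]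
        have : n ≠ k := fun h => hne (by subst h; rfl)
        simp [this]
      · rw [aux_dec_neg 𝒜 hneg f (Int.negSucc_lt_zero k)]; simp
    · intro hns
      rw [DFinsupp.notMem_support_iff.mp hns]; simp
  rw [hr, hc]

lemma aux_dec_zero (f : Polynomial R) :
    (DirectSum.decompose 𝒜 f (0 : ℤ) : Polynomial R) = C (f.coeff 0) := by
  have := aux_dec_nat 𝒜 hnat hneg f 0
  simpa using this

lemma aux_comap_homog (I : Ideal R) :
    (I.comap (constantCoeff : Polynomial R →+* R)).IsHomogeneous 𝒜 := by
  intro i f hf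
  rw [Ideal.mem_comap] at hf ⊢
  rcases i with n | n
  · have hk : (DirectSum.decompose 𝒜 f (Int.ofNat n) : Polynomial R)
        = C (f.coeff n) * X ^ n := aux_dec_nat 𝒜 hnat hneg f n
    rw [hk]
    cases n with
    | zero => simpa [constantCoeff_apply] using hf
    | succ k => simp [constantCoeff_apply, coeff_C_mul, coeff_X_pow]
  · rw [aux_dec_neg 𝒜 hneg f (Int.negSucc_lt_zero n)]
    simp

omit [GradedRing 𝒜] in
lemma aux_homog_elem {a : Polynomial R} (ha : SetLike.IsHomogeneousElem 𝒜 a) :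
    ∃ (k : ℕ) (r : R), a = C r * X ^ k := by
  obtain ⟨i, hi⟩ := ha
  rcases i with k | k
  · obtain ⟨r, hr⟩ := (hnat k a).1 hi
    exact ⟨k, r, hr⟩
  · rw [hneg _ (Int.negSucc_lt_zero k)] at hi
    exact ⟨0, 0, by simp [AddSubgroup.mem_bot.mp hi]⟩

lemma aux_gmax {m : Ideal R} (hm : m.IsMaximal) :
    IsGradedMaximal 𝒜 (m.comap (constantCoeff : Polynomial R →+* R)) := by
  refine ⟨aux_comap_homog 𝒜 hnat hneg m, ?_, ?_⟩
  · intro htop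
    have h1 : (1 : Polynomial R) ∈ m.comap constantCoeff := htop ▸ Submodule.mem_top
    rw [Ideal.mem_comap, map_one] at h1
    exact hm.ne_top ((Ideal.eq_top_iff_one m).mpr h1)
  · intro J hJhom hle hne
    refine le_antisymm (fun f hf => ?_) hle
    rw [Ideal.mem_comap, constantCoeff_apply]
    have hcomp : C (f.coeff 0) ∈ J := by
      have := hJhom 0 hf
      rwa [aux_dec_zero 𝒜 hnat hneg f] at this
    have hmn : m ≤ J.comap C := fun r hr => by
      rw [Ideal.mem_comap]
      exact hle (by rw [Ideal.mem_comap]; simpa [constantCoeff_apply] using hr)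
    have hne' : J.comap (C : R →+* Polynomial R) ≠ ⊤ := by
      intro h
      have h1 : (1 : R) ∈ J.comap C := h ▸ Submodule.mem_top
      rw [Ideal.mem_comap, map_one] at h1
      exact hne ((Ideal.eq_top_iff_one J).mpr h1)
    rw [hm.eq_of_le hne' hmn, Ideal.mem_comap]
    exact hcomp

lemma aux_X_mem {M : Ideal (Polynomial R)} (hM : IsGradedMaximal 𝒜 M) :
    (X : Polynomial R) ∈ M := by
  have hXhom : SetLike.IsHomogeneousElem 𝒜 (X : Polynomial R) :=
    ⟨(1 : ℤ), (hnat 1 X).2 ⟨1, by simp⟩⟩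
  set J := M ⊔ Ideal.span {(X : Polynomial R)} with hJ
  have hJhom : J.IsHomogeneous 𝒜 := by
    refine hM.1.sup (Ideal.homogeneous_span 𝒜 _ ?_)
    rintro x hx
    rw [Set.mem_singleton_iff] at hx
    subst hx
    exact hXhom
  have hJne : J ≠ ⊤ := by
    intro h
    have h1 : (1 : Polynomial R) ∈ J := h ▸ Submodule.mem_top
    obtain ⟨a, ha, b, hb, hab⟩ := Submodule.mem_sup.mp h1
    obtain ⟨c, hc⟩ := Ideal.mem_span_singleton'.mp hb
    have hca : a.coeff 0 = 1 := by
      have h2 := congrArg (fun p => Polynomial.coeff p 0) hab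
      simp only [coeff_add, coeff_one] at h2
      rw [← hc] at h2
      simpa [coeff_mul_X_zero] using h2
    have hCM : C (a.coeff 0) ∈ M := by
      have := hM.1 0 ha
      rwa [aux_dec_zero 𝒜 hnat hneg a] at this
    rw [hca, map_one] at hCM
    exact hM.2.1 ((Ideal.eq_top_iff_one M).mpr hCM)
  have hJM := hM.2.2 J hJhom le_sup_left hJne
  rw [← hJM]
  exact Submodule.mem_sup_right (Ideal.mem_span_singleton_self X)

lemma aux_gmax_struct {M : Ideal (Polynomial R)} (hM : IsGradedMaximal 𝒜 M) :
    (M.comap (C : R →+* Polynomial R)).IsMaximal ∧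
      M = (M.comap (C : R →+* Polynomial R)).comap (constantCoeff : Polynomial R →+* R) := by
  have hMcoe : ∀ f ∈ M, C (f.coeff 0) ∈ M := fun f hf => by
    have := hM.1 0 hf
    rwa [aux_dec_zero 𝒜 hnat hneg f] at this
  have heq : M = (M.comap (C : R →+* Polynomial R)).comap constantCoeff := by
    apply le_antisymm
    · intro f hf
      rw [Ideal.mem_comap, Ideal.mem_comap, constantCoeff_apply]
      exact hMcoe f hf
    · intro f hf
      rw [Ideal.mem_comap, Ideal.mem_comap, constantCoeff_apply] at hf
      have hfd : f = X * f.divX + C (f.coeff 0) := (X_mul_divX_add f).symm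
      rw [hfd]
      exact M.add_mem (Ideal.mul_mem_right _ _ (aux_X_mem 𝒜 hnat hneg hM)) hf
  refine ⟨?_, heq⟩
  rw [Ideal.isMaximal_def]
  constructor
  · intro h
    have h1 : (1 : R) ∈ M.comap C := h ▸ Submodule.mem_top
    rw [Ideal.mem_comap, map_one] at h1
    exact hM.2.1 ((Ideal.eq_top_iff_one M).mpr h1)
  · intro b hb
    by_contra hbne
    have hNhom := aux_comap_homog 𝒜 hnat hneg b
    have hMN : M ≤ b.comap constantCoeff := fun f hf => by
      rw [Ideal.mem_comap, constantCoeff_apply]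
      exact hb.le (by rw [Ideal.mem_comap]; exact hMcoe f hf)
    have hNne : b.comap (constantCoeff : Polynomial R →+* R) ≠ ⊤ := by
      intro h
      have h1 : (1 : Polynomial R) ∈ b.comap constantCoeff := h ▸ Submodule.mem_top
      rw [Ideal.mem_comap, map_one] at h1
      exact hbne ((Ideal.eq_top_iff_one b).mpr h1)
    have hNM := hM.2.2 _ hNhom hMN hNne
    have hble : b ≤ M.comap C := fun r hr => by
      rw [Ideal.mem_comap, ← hNM, Ideal.mem_comap]
      simpa [constantCoeff_apply] using hr
    exact absurd (hb.trans_le hble) (lt_irrefl _)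

lemma aux_gprime {p : Ideal R} (hp : p.IsPrime) :
    IsGradedPrime 𝒜 (p.comap (constantCoeff : Polynomial R →+* R)) := by
  refine ⟨aux_comap_homog 𝒜 hnat hneg p, ?_, ?_⟩
  · intro htop
    have h1 : (1 : Polynomial R) ∈ p.comap constantCoeff := htop ▸ Submodule.mem_top
    rw [Ideal.mem_comap, map_one] at h1
    exact hp.ne_top ((Ideal.eq_top_iff_one p).mpr h1)
  · intro a b ha hb hab
    obtain ⟨k, r, rfl⟩ := aux_homog_elem 𝒜 hnat hneg ha
    obtain ⟨l, s, rfl⟩ := aux_homog_elem 𝒜 hnat hneg hb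
    rw [Ideal.mem_comap, constantCoeff_apply] at hab
    cases k with
    | succ k => left; rw [Ideal.mem_comap, constantCoeff_apply]; simp [coeff_C_mul, coeff_X_pow]
    | zero =>
      cases l with
      | succ l =>
        right; rw [Ideal.mem_comap, constantCoeff_apply]; simp [coeff_C_mul, coeff_X_pow]
      | zero =>
        have h0 : (r * s : R) ∈ p := by
          simpa [mul_coeff_zero] using hab
        rcases hp.mem_or_mem h0 with h | h
        · left; rw [Ideal.mem_comap, constantCoeff_apply]; simpa using h
        · right; rw [Ideal.mem_comap, constantCoeff_apply]; simpa using h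

end PolyAux


theorem stmt_13 {R : Type*} [CommRing R]
    (𝒜 : ℤ → AddSubgroup (Polynomial R)) [GradedRing 𝒜]
    (hnat : ∀ (n : ℕ) (p : Polynomial R),
      p ∈ 𝒜 (n : ℤ) ↔ ∃ r : R, p = Polynomial.C r * Polynomial.X ^ n)
    (hneg : ∀ n : ℤ, n < 0 → 𝒜 n = ⊥) :
    IsGelfandGraded 𝒜 ↔
      ∀ P : Ideal R, P.IsPrime → ∃! M : Ideal R, M.IsMaximal ∧ P ≤ M := by
  open Polynomial in
  constructor
  · intro hG p hp
    obtain ⟨M, ⟨hMmax, hPM⟩, huniq⟩ := hG _ (aux_gprime 𝒜 hnat hneg hp)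
    obtain ⟨hmmax, hMeq⟩ := aux_gmax_struct 𝒜 hnat hneg hMmax
    refine ⟨M.comap C, ⟨hmmax, fun r hr => ?_⟩, ?_⟩
    · rw [Ideal.mem_comap]
      exact hPM (by rw [Ideal.mem_comap]; simpa [constantCoeff_apply] using hr)
    · rintro m' ⟨hm', hpm'⟩
      have hM' : m'.comap constantCoeff = M := by
        refine huniq _ ⟨aux_gmax 𝒜 hnat hneg hm', fun f hf => ?_⟩
        rw [Ideal.mem_comap] at hf ⊢
        exact hpm' hf
      ext r
      rw [Ideal.mem_comap, ← hM', Ideal.mem_comap]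
      simp [constantCoeff_apply]
  · intro h P hP
    have hpprime : (P.comap (C : R →+* Polynomial R)).IsPrime := by
      constructor
      · intro htop
        have h1 : (1 : R) ∈ P.comap C := htop ▸ Submodule.mem_top
        rw [Ideal.mem_comap, map_one] at h1
        exact hP.2.1 ((Ideal.eq_top_iff_one P).mpr h1)
      · intro r s hrs
        rw [Ideal.mem_comap, map_mul] at hrs
        have h0 : SetLike.IsHomogeneousElem 𝒜 (C r : Polynomial R) :=
          ⟨(0 : ℤ), (hnat 0 _).2 ⟨r, by simp⟩⟩
        have h0' : SetLike.IsHomogeneousElem 𝒜 (C s : Polynomial R) :=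
          ⟨(0 : ℤ), (hnat 0 _).2 ⟨s, by simp⟩⟩
        rcases hP.2.2 _ _ h0 h0' hrs with hc | hc
        · exact Or.inl (by rwa [Ideal.mem_comap])
        · exact Or.inr (by rwa [Ideal.mem_comap])
    obtain ⟨m, ⟨hm, hpm⟩, huniq⟩ := h _ hpprime
    refine ⟨m.comap constantCoeff, ⟨aux_gmax 𝒜 hnat hneg hm, fun f hf => ?_⟩, ?_⟩
    · rw [Ideal.mem_comap, constantCoeff_apply]
      refine hpm ?_
      rw [Ideal.mem_comap]
      have := hP.1 0 hf
      rwa [aux_dec_zero 𝒜 hnat hneg f] at this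
    · rintro M' ⟨hM'max, hPM'⟩
      obtain ⟨hmax', heq'⟩ := aux_gmax_struct 𝒜 hnat hneg hM'max
      have hcm : M'.comap (C : R →+* Polynomial R) = m := by
        refine huniq _ ⟨hmax', fun r hr => ?_⟩
        rw [Ideal.mem_comap] at hr ⊢
        exact hPM' hr
      rw [heq', hcm]

end Poly
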